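/- Let t be a closed λ-term, and let p, q₁, q₂, r be positions such that ⟨t, pq₁r⟩ and ⟨t, pq₂r⟩ are valid term nodes. If the term nodes ⟨t, pq₁⟩ and ⟨t, pq₂⟩ are bisimilar and q₁ is locally closed in t[p], then (⟨t[p]⟩q₁)[r] = (⟨t[p]⟩q₂)[r]. -/
import Mathlib


namespace HashAlpha

/-- g-terms: λ-terms with de Bruijn indices, extended with global variables `gvar t`. -/
inductive GTerm : Type
  | var : ℕ → GTerm
  | app : GTerm → GTerm → GTerm
  | lam : GTerm → GTerm
  | gvar : GTerm → GTerm
  deriving DecidableEq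

/-- A g-term is a pure λ-term if it contains no global variables. -/
def GTerm.IsPure : GTerm → Prop
  | .var _ => True
  | .app a b => a.IsPure ∧ b.IsPure
  | .lam a => a.IsPure
  | .gvar _ => False

/-- Directions for term positions: ↓, ↙, ↘. -/
inductive Dir : Type
  | down | left | right
  deriving DecidableEq

/-- A term position is a word over {↓, ↙, ↘}. -/
abbrev Pos := List Dir

/-- `|p|_λ`: the number of ↓'s in a position. -/
def lamDepth (p : Pos) : ℕ := p.count Dir.down

/-- Term indexing `t[p]` (partial; does not descend into global variables). -/
def GTerm.index : GTerm → Pos → Option GTerm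
  | t, [] => some t
  | .app a _, .left :: p => a.index p
  | .app _ b, .right :: p => b.index p
  | .lam a, .down :: p => a.index p
  | _, _ => none

/-- `valid(t)`: the set of positions where `t[p]` is defined. -/
def Valid (t : GTerm) : Set Pos := {p | (t.index p).isSome}

/-- `vars(t)`: positions of variables. -/
def Vars (t : GTerm) : Set Pos := {p | ∃ i, t.index p = some (.var i)}

/-- `free(t)`: positions of free variables. -/
def Free (t : GTerm) : Set Pos :=
  {p | ∃ i, t.index p = some (.var i) ∧ lamDepth p ≤ i}

/-- A term is closed if it has no free variables. -/
def Closed (t : GTerm) : Prop := Free t = ∅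

/-- `p` is locally closed in `t`: every free variable of `t[p]` is also free in `t`. -/
def LocallyClosed (t : GTerm) (p : Pos) : Prop :=
  p ∈ Valid t ∧ ∀ u, t.index p = some u → ∀ q ∈ Free u, p ++ q ∈ Free t

/-- Subtract `d0` from every free variable (`d` is the current binder depth). -/
def declift (d0 : ℕ) : GTerm → ℕ → GTerm
  | .var j, d => if d ≤ j then .var (j - d0) else .var j
  | .app a b, d => .app (declift d0 a d) (declift d0 b d)
  | .lam a, d => .lam (declift d0 a (d + 1))
  | .gvar a, _ => .gvar a

/-- The lift `⟨t⟩p`: equal to `t[p]` except every free variable of `t[p]` is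
decremented by `|p|_λ`. -/
def liftAt (t : GTerm) (p : Pos) : Option GTerm :=
  (t.index p).map (fun u => declift (lamDepth p) u 0)

/-- Transition labels: ↓, ↙, ↘ and ↑. -/
inductive Lab : Type
  | down | left | right | up
  deriving DecidableEq

def Lab.ofDir : Dir → Lab
  | .down => .down
  | .left => .left
  | .right => .right

/-- Transitions between term nodes. -/
inductive Trans : GTerm × Pos → Lab → GTerm × Pos → Prop
  | dir (t : GTerm) (p : Pos) (x : Dir) :
      (p ++ [x]) ∈ Valid t → Trans (t, p) (Lab.ofDir x) (t, p ++ [x])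
  | up (t : GTerm) (q r : Pos) :
      t.index (q ++ Dir.down :: r) = some (.var (lamDepth r)) →
      Trans (t, q ++ Dir.down :: r) Lab.up (t, q)

/-- `R` is a bisimulation. -/
def IsBisim (R : GTerm × Pos → GTerm × Pos → Prop) : Prop :=
  ∀ n₁ n₂, R n₁ n₂ → ∀ x : Lab,
    (∀ n₁', Trans n₁ x n₁' → ∃ n₂', Trans n₂ x n₂' ∧ R n₁' n₂') ∧
    (∀ n₂', Trans n₂ x n₂' → ∃ n₁', Trans n₁ x n₁' ∧ R n₁' n₂')

/-- Two nodes are bisimilar when some bisimulation relates them. -/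
def Bisim (n₁ n₂ : GTerm × Pos) : Prop := ∃ R, IsBisim R ∧ R n₁ n₂

/-- `(t, p)` is a term node: `t` is closed and `p ∈ valid(t)`. -/
def IsNode (t : GTerm) (p : Pos) : Prop := Closed t ∧ p ∈ Valid t

/-- A single fork between term nodes (let-abs rule or closed rule). -/
def SingleFork (n₁ n₂ : GTerm × Pos) : Prop :=
  (∃ t p q₁ q₂ r u,
      n₁ = (t, p ++ q₁ ++ r) ∧ n₂ = (t, p ++ q₂ ++ r) ∧
      IsNode t (p ++ q₁ ++ r) ∧ IsNode t (p ++ q₂ ++ r) ∧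
      t.index p = some u ∧ LocallyClosed u q₁ ∧ liftAt u q₁ = liftAt u q₂) ∨
  (∃ t₁ t₂ p₁ p₂ r u,
      n₁ = (t₁, p₁ ++ r) ∧ n₂ = (t₂, p₂ ++ r) ∧
      IsNode t₁ (p₁ ++ r) ∧ IsNode t₂ (p₂ ++ r) ∧
      t₁.index p₁ = some u ∧ Closed u ∧ t₂.index p₂ = some u)

/-- Fork equivalence: the transitive closure of single forks. -/
def ForkEquiv : GTerm × Pos → GTerm × Pos → Prop := Relation.TransGen SingleFork

/-- Shift free variables ≥ `c` up by `d`. -/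
def shiftAux (c d : ℕ) : GTerm → GTerm
  | .var j => if j < c then .var j else .var (j + d)
  | .app a b => .app (shiftAux c d a) (shiftAux c d b)
  | .lam a => .lam (shiftAux (c + 1) d a)
  | .gvar a => .gvar a

/-- Capture-avoiding substitution of free variable `i` by `u` (at current depth `d`). -/
def substAux (i : ℕ) (u : GTerm) : ℕ → GTerm → GTerm
  | d, .var j => if j = i + d then shiftAux 0 d u else .var j
  | d, .app a b => .app (substAux i u d a) (substAux i u d b)
  | d, .lam a => .lam (substAux i u (d + 1) a)
  | _, .gvar a => .gvar a

/-- `t[i := u]`: capture-avoiding substitution of variable `i` by `u` in `t`. -/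
def subst (i : ℕ) (u : GTerm) (t : GTerm) : GTerm := substAux i u 0 t

/-- Simultaneous capture-avoiding substitution of variable `i` by `σᵢ`
(at current depth `d`). -/
def msubstAux (σ : List GTerm) : ℕ → GTerm → GTerm
  | d, .var j =>
      if j < d then .var j else shiftAux 0 d (σ.getD (j - d) (.var (j - d)))
  | d, .app a b => .app (msubstAux σ d a) (msubstAux σ d b)
  | d, .lam a => .lam (msubstAux σ (d + 1) a)
  | _, .gvar a => .gvar a

/-- `tσ`: simultaneous substitution of each variable `i` by the `i`-th element of `σ`. -/
def msubst (σ : List GTerm) (t : GTerm) : GTerm := msubstAux σ 0 t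

/-- Term size (the term summary `|t|`); global variables count as leaves. -/
def gsize : GTerm → ℕ
  | .var _ => 1
  | .gvar _ => 1
  | .app a b => gsize a + gsize b + 1
  | .lam a => gsize a + 1

theorem gsize_shiftAux (c d : ℕ) (t : GTerm) : gsize (shiftAux c d t) = gsize t := by
  induction t generalizing c with
  | var j => simp only [shiftAux]; split <;> rfl
  | app a b iha ihb => simp [shiftAux, gsize, iha, ihb]
  | lam a ih => simp [shiftAux, gsize, ih]
  | gvar a => rfl

theorem gsize_substAux_gvar (i : ℕ) (w : GTerm) (d : ℕ) (t : GTerm) :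
    gsize (substAux i (.gvar w) d t) = gsize t := by
  induction t generalizing d with
  | var j => simp only [substAux]; split <;> rfl
  | app a b iha ihb => simp [substAux, gsize, iha, ihb]
  | lam a ih => simp [substAux, gsize, ih]
  | gvar a => rfl

theorem gsize_msubstAux (σ : List GTerm) (h : ∀ u ∈ σ, ∃ w, u = .gvar w)
    (d : ℕ) (t : GTerm) : gsize (msubstAux σ d t) = gsize t := by
  induction t generalizing d with
  | var j =>
    simp only [msubstAux]
    split
    · rfl
    · rw [gsize_shiftAux]
      rcases Nat.lt_or_ge (j - d) σ.length with hl | hl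
      · rw [List.getD_eq_getElem _ _ hl]
        obtain ⟨w, hw⟩ := h _ (List.getElem_mem hl)
        rw [hw]; rfl
      · rw [List.getD_eq_default _ _ hl]; rfl
  | app a b iha ihb => simp [msubstAux, gsize, iha, ihb]
  | lam a ih => simp [msubstAux, gsize, ih]
  | gvar a => rfl

theorem gsize_msubst (σ : List GTerm) (h : ∀ u ∈ σ, ∃ w, u = .gvar w)
    (t : GTerm) : gsize (msubst σ t) = gsize t :=
  gsize_msubstAux σ h 0 t

/-- The naive globalization procedure. -/
def globalizeNaive : GTerm → GTerm
  | .lam t => .lam (globalizeNaive (subst 0 (.gvar (.lam t)) t))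
  | .app t u => .app (globalizeNaive t) (globalizeNaive u)
  | .gvar t => .gvar t
  | .var i => .var i
termination_by t => gsize t
decreasing_by
  · simp only [subst, gsize_substAux_gvar, gsize]; omega
  · simp only [gsize]; omega
  · simp only [gsize]; omega

/-- The strongly connected component of a closed g-term: positions all of whose
nonempty prefixes index open terms. -/
def SCC (t : GTerm) : Set Pos :=
  {p | p ∈ Valid t ∧ ∀ p' u, p' ≠ [] → p' <+: p → t.index p' = some u → ¬ Closed u}

/-- `duplicates(t)`: strict subterms in the SCC of `t` whose term summary (size)
is not unique within the SCC. -/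
def duplicates (t : GTerm) : Set GTerm :=
  {u | ∃ p q v, p ∈ SCC t ∧ q ∈ SCC t ∧ p ≠ [] ∧ q ≠ [] ∧ p ≠ q ∧
      t.index p = some u ∧ t.index q = some v ∧ gsize u = gsize v}

open Classical in
mutual
/-- Efficient globalization. -/
noncomputable def globalize (r : GTerm) : GTerm :=
  globalizeScc r [] (by simp) r
termination_by (gsize r, 2)
decreasing_by
  apply Prod.Lex.right; omega

noncomputable def globalizeScc (r : GTerm) (σ : List GTerm)
    (h : ∀ u ∈ σ, ∃ w, u = GTerm.gvar w) : GTerm → GTerm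
  | .lam t => .lam (globalizeStep r (.gvar (.app r t) :: σ)
      (by
        intro u hu
        rcases List.mem_cons.mp hu with h' | h'
        · exact ⟨_, h'⟩
        · exact h u h') t)
  | .app t u => .app (globalizeStep r σ h t) (globalizeStep r σ h u)
  | .gvar t => .gvar t
  | .var i => msubst σ (.var i)
termination_by t => (gsize t, 1)
decreasing_by
  · apply Prod.Lex.left; simp only [gsize]; omega
  · apply Prod.Lex.left; simp only [gsize]; omega
  · apply Prod.Lex.left; simp only [gsize]; omega

noncomputable def globalizeStep (r : GTerm) (σ : List GTerm)
    (h : ∀ u ∈ σ, ∃ w, u = GTerm.gvar w) (t : GTerm) : GTerm :=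
  if Closed t ∨ t ∈ duplicates r then globalize (msubst σ t)
  else globalizeScc r σ h t
termination_by (gsize t, 3)
decreasing_by
  · rw [gsize_msubst σ h]; apply Prod.Lex.right; omega
  · apply Prod.Lex.right; omega
end


/-! ### Auxiliary lemmas -/

theorem index_append (t : GTerm) (a b : Pos) :
    t.index (a ++ b) = (t.index a).bind (fun u => u.index b) := by
  induction a generalizing t with
  | nil => simp [GTerm.index]
  | cons x a ih => cases t <;> cases x <;> simp [GTerm.index, ih]

theorem lamDepth_append (a b : Pos) : lamDepth (a ++ b) = lamDepth a + lamDepth b := by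
  simp [lamDepth]

theorem lamDepth_cons (x : Dir) (l : Pos) :
    lamDepth (x :: l) = lamDepth l + (if x = Dir.down then 1 else 0) := by
  simp [lamDepth, List.count_cons]

theorem declift_index (d0 : ℕ) (w : GTerm) (r : Pos) (d : ℕ) :
    (declift d0 w d).index r = (w.index r).map (fun v => declift d0 v (d + lamDepth r)) := by
  induction r generalizing w d with
  | nil => simp [GTerm.index, lamDepth]
  | cons x r ih =>
    cases w with
    | var j => simp only [declift]; split <;> cases x <;> simp [GTerm.index]
    | app a b => cases x <;> simp [declift, GTerm.index, ih, lamDepth_cons]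
    | lam a =>
      cases x <;> simp [declift, GTerm.index, ih, lamDepth_cons, Nat.add_assoc, Nat.add_comm 1]
    | gvar a => cases x <;> simp [declift, GTerm.index]

theorem isPure_index {t : GTerm} (ht : t.IsPure) {p : Pos} {v : GTerm}
    (h : t.index p = some v) : v.IsPure := by
  induction p generalizing t with
  | nil => simp [GTerm.index] at h; subst h; exact ht
  | cons x p ih =>
    cases t <;> cases x <;> simp [GTerm.index] at h <;> simp [GTerm.IsPure] at ht
    · exact ih ht.1 h
    · exact ih ht.2 h
    · exact ih ht h

theorem gsize_pos (t : GTerm) : 0 < gsize t := by cases t <;> simp [gsize]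

theorem length_lt_gsize {t : GTerm} {p : Pos} (h : (t.index p).isSome) :
    p.length < gsize t := by
  induction p generalizing t with
  | nil => simpa using gsize_pos t
  | cons x p ih =>
    cases t with
    | var n => cases x <;> simp [GTerm.index] at h
    | gvar a => cases x <;> simp [GTerm.index] at h
    | app a b =>
      cases x <;> simp [GTerm.index, gsize] at h ⊢
      · have := ih h; omega
      · have := ih h; omega
    | lam a =>
      cases x <;> simp [GTerm.index, gsize] at h ⊢
      have := ih h; omega

theorem mem_valid_of_index {t : GTerm} {p : Pos} {v : GTerm} (h : t.index p = some v) :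
    p ∈ Valid t := by simp [Valid, h]

theorem index_of_valid {t : GTerm} {p : Pos} (h : p ∈ Valid t) : ∃ v, t.index p = some v :=
  Option.isSome_iff_exists.mp h

theorem valid_prefix {t : GTerm} {a b : Pos} (h : a <+: b) (hb : b ∈ Valid t) :
    a ∈ Valid t := by
  obtain ⟨c, rfl⟩ := h
  obtain ⟨v, hv⟩ := index_of_valid hb
  rw [index_append] at hv
  cases h' : t.index a with
  | none => rw [h'] at hv; simp at hv
  | some w => exact mem_valid_of_index h'

theorem closed_var_lt {t : GTerm} (hc : Closed t) {p : Pos} {i : ℕ}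
    (h : t.index p = some (.var i)) : i < lamDepth p := by
  by_contra hle
  have hmem : p ∈ Free t := ⟨i, h, by omega⟩
  rw [Closed] at hc
  rw [hc] at hmem
  exact hmem

/-! ### Bisimulation infrastructure -/

theorem bisim_symm {n m : GTerm × Pos} (h : Bisim n m) : Bisim m n := by
  obtain ⟨R, hR, hr⟩ := h
  refine ⟨fun a b => R b a, ?_, hr⟩
  intro n₁ n₂ hr' x
  exact ⟨(hR n₂ n₁ hr' x).2, (hR n₂ n₁ hr' x).1⟩

theorem bisim_trans {n m k : GTerm × Pos} (h1 : Bisim n m) (h2 : Bisim m k) : Bisim n k := by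
  obtain ⟨R, hR, hr⟩ := h1
  obtain ⟨S, hS, hs⟩ := h2
  refine ⟨fun a c => ∃ b, R a b ∧ S b c, ?_, m, hr, hs⟩
  rintro n₁ n₃ ⟨n₂, hr', hs'⟩ x
  constructor
  · intro n₁' ht1
    obtain ⟨n₂', ht2, hr''⟩ := (hR n₁ n₂ hr' x).1 n₁' ht1
    obtain ⟨n₃', ht3, hs''⟩ := (hS n₂ n₃ hs' x).1 n₂' ht2
    exact ⟨n₃', ht3, n₂', hr'', hs''⟩
  · intro n₃' ht3
    obtain ⟨n₂', ht2, hs''⟩ := (hS n₂ n₃ hs' x).2 n₃' ht3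
    obtain ⟨n₁', ht1, hr''⟩ := (hR n₁ n₂ hr' x).2 n₂' ht2
    exact ⟨n₁', ht1, n₂', hr'', hs''⟩

theorem bisim_step {n₁ n₂ n₁' : GTerm × Pos} {x : Lab} (h : Bisim n₁ n₂)
    (ht : Trans n₁ x n₁') : ∃ n₂', Trans n₂ x n₂' ∧ Bisim n₁' n₂' := by
  obtain ⟨R, hR, hr⟩ := h
  obtain ⟨n₂', ht2, hr'⟩ := (hR n₁ n₂ hr x).1 n₁' ht
  exact ⟨n₂', ht2, R, hR, hr'⟩

theorem ofDir_ne_up (x : Dir) : Lab.ofDir x ≠ Lab.up := by cases x <;> simp [Lab.ofDir]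

theorem trans_inv {t : GTerm} {a : Pos} {l : Lab} {n' : GTerm × Pos}
    (h : Trans (t, a) l n') :
    (∃ d, l = Lab.ofDir d ∧ n' = (t, a ++ [d]) ∧ (a ++ [d]) ∈ Valid t) ∨
    (∃ q s, l = Lab.up ∧ a = q ++ Dir.down :: s ∧
        t.index a = some (.var (lamDepth s)) ∧ n' = (t, q)) := by
  cases h with
  | dir t p d hv => exact Or.inl ⟨d, rfl, rfl, hv⟩
  | up t q r hi => exact Or.inr ⟨q, r, rfl, rfl, hi, rfl⟩

theorem trans_dir_inv {t : GTerm} {a : Pos} {x : Dir} {n' : GTerm × Pos}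
    (h : Trans (t, a) (Lab.ofDir x) n') : n' = (t, a ++ [x]) ∧ (a ++ [x]) ∈ Valid t := by
  rcases trans_inv h with ⟨d, hd, h1, h2⟩ | ⟨q, s, hl, _⟩
  · have : d = x := by cases d <;> cases x <;> simp_all [Lab.ofDir]
    subst this; exact ⟨h1, h2⟩
  · exact absurd hl (ofDir_ne_up x)

theorem trans_up_inv {t : GTerm} {a : Pos} {n' : GTerm × Pos}
    (h : Trans (t, a) Lab.up n') :
    ∃ q s, a = q ++ Dir.down :: s ∧ t.index a = some (.var (lamDepth s)) ∧ n' = (t, q) := by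
  rcases trans_inv h with ⟨d, hd, _⟩ | ⟨q, s, _, h1, h2, h3⟩
  · exact absurd hd.symm (ofDir_ne_up d)
  · exact ⟨q, s, h1, h2, h3⟩

theorem bisim_path {t₁ t₂ : GTerm} {a b : Pos} (s : Pos) (h : Bisim (t₁, a) (t₂, b))
    (hv : (a ++ s) ∈ Valid t₁) (hvb : b ∈ Valid t₂) :
    (b ++ s) ∈ Valid t₂ ∧ Bisim (t₁, a ++ s) (t₂, b ++ s) := by
  induction s generalizing a b with
  | nil => simpa using ⟨hvb, h⟩
  | cons x s ih =>
    have hv1 : (a ++ [x]) ∈ Valid t₁ :=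
      valid_prefix ⟨s, by simp⟩ hv
    have ht1 : Trans (t₁, a) (Lab.ofDir x) (t₁, a ++ [x]) := Trans.dir t₁ a x hv1
    obtain ⟨n₂', ht2, hb'⟩ := bisim_step h ht1
    obtain ⟨rfl, hv2⟩ := trans_dir_inv ht2
    have := ih hb' (by simpa using hv) hv2
    simpa using this

theorem not_bisim_extend {t : GTerm} {a c : Pos} (hv : (a ++ c) ∈ Valid t) (hc : c ≠ []) :
    ¬ Bisim (t, a) (t, a ++ c) := by
  intro hb
  have key : ∀ n : ℕ, ∃ z : Pos, z ≠ [] ∧ n ≤ z.length ∧ (a ++ z) ∈ Valid t ∧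
      Bisim (t, a) (t, a ++ z) := by
    intro n
    induction n with
    | zero => exact ⟨c, hc, Nat.zero_le _, hv, hb⟩
    | succ n ih =>
      obtain ⟨z, hz, hn, hvz, hbz⟩ := ih
      have h2 := bisim_path z hbz hvz hvz
      refine ⟨z ++ z, by simp [hz], ?_, by simpa [List.append_assoc] using h2.1,
        bisim_trans hbz (by simpa [List.append_assoc] using h2.2)⟩
      have : 1 ≤ z.length := List.length_pos_iff.mpr hz
      simp only [List.length_append]; omega
  obtain ⟨z, hz, hn, hvz, _⟩ := key (gsize t)
  have := length_lt_gsize (t := t) (p := a ++ z) hvz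
  simp only [List.length_append] at this
  omega

theorem exists_split {k : ℕ} {l : Pos} (h : k < lamDepth l) :
    ∃ l₁ l₂, l = l₁ ++ Dir.down :: l₂ ∧ lamDepth l₂ = k := by
  induction l with
  | nil => simp [lamDepth] at h
  | cons x l ih =>
    by_cases hk : k < lamDepth l
    · obtain ⟨l₁, l₂, rfl, hl⟩ := ih hk
      exact ⟨x :: l₁, l₂, rfl, hl⟩
    · have hx : x = Dir.down := by
        by_contra hx
        rw [lamDepth_cons, if_neg hx] at h
        omega
      rw [lamDepth_cons, if_pos hx] at h
      exact ⟨[], l, by simp [hx], by omega⟩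


theorem bisim_prefix_eq {t : GTerm} {a b g : Pos} (h1 : a <+: g) (h2 : b <+: g)
    (hg : g ∈ Valid t) (hb : Bisim (t, a) (t, b)) : a = b := by
  rcases List.prefix_or_prefix_of_prefix h1 h2 with ⟨e, he⟩ | ⟨e, he⟩
  · rcases eq_or_ne e [] with rfl | hne
    · simpa using he
    · exact absurd (by rw [he]; exact hb)
        (not_bisim_extend (by rw [he]; exact valid_prefix h2 hg) hne)
  · rcases eq_or_ne e [] with rfl | hne
    · have : b = a := by simpa using he
      exact this.symm
    · exact absurd (by rw [he]; exact bisim_symm hb)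
        (not_bisim_extend (by rw [he]; exact valid_prefix h1 hg) hne)

theorem index_left_shape {v : GTerm} (hp : v.IsPure) (h : (v.index [Dir.left]).isSome) :
    ∃ x y, v = .app x y := by
  cases v <;> simp [GTerm.index] at h ⊢

theorem index_down_shape {v : GTerm} (hp : v.IsPure) (h : (v.index [Dir.down]).isSome) :
    ∃ x, v = .lam x := by
  cases v <;> simp [GTerm.index] at h ⊢

theorem main_lemma (t : GTerm) (ht : t.IsPure) (hcl : Closed t)
    (p q₁ q₂ : Pos) (u : GTerm) (hp : t.index p = some u)
    (hlc : LocallyClosed u q₁)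
    (hb : Bisim (t, p ++ q₁) (t, p ++ q₂)) :
    ∀ v₁ r v₂, t.index (p ++ q₁ ++ r) = some v₁ → t.index (p ++ q₂ ++ r) = some v₂ →
      declift (lamDepth q₁) v₁ (lamDepth r) = declift (lamDepth q₂) v₂ (lamDepth r) := by
  intro v₁
  induction v₁ with
  | gvar a =>
    intro r v₂ h1 h2
    exact absurd (isPure_index ht h1) (by simp [GTerm.IsPure])
  | app a b iha ihb =>
    intro r v₂ h1 h2
    have hv1 : (p ++ q₁ ++ r) ∈ Valid t := mem_valid_of_index h1
    have hv2 : (p ++ q₂ ++ r) ∈ Valid t := mem_valid_of_index h2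
    have hvb : (p ++ q₂) ∈ Valid t := valid_prefix ⟨r, rfl⟩ hv2
    have hbr : Bisim (t, p ++ q₁ ++ r) (t, p ++ q₂ ++ r) := (bisim_path r hb hv1 hvb).2
    have hL : t.index ((p ++ q₁ ++ r) ++ [Dir.left]) = some a := by
      rw [index_append, h1]; simp [GTerm.index]
    have hL2 : ((p ++ q₂ ++ r) ++ [Dir.left]) ∈ Valid t :=
      (bisim_path [Dir.left] hbr (mem_valid_of_index hL) hv2).1
    have hv2L : (v₂.index [Dir.left]).isSome := by
      have h' := hL2
      rw [Valid, Set.mem_setOf_eq, index_append, h2] at h'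
      simpa using h'
    obtain ⟨a', b', rfl⟩ := index_left_shape (isPure_index ht h2) hv2L
    have h1a : t.index (p ++ q₁ ++ (r ++ [Dir.left])) = some a := by
      rw [← List.append_assoc, index_append, h1]; simp [GTerm.index]
    have h2a : t.index (p ++ q₂ ++ (r ++ [Dir.left])) = some a' := by
      rw [← List.append_assoc, index_append, h2]; simp [GTerm.index]
    have h1b : t.index (p ++ q₁ ++ (r ++ [Dir.right])) = some b := by
      rw [← List.append_assoc, index_append, h1]; simp [GTerm.index]
    have h2b : t.index (p ++ q₂ ++ (r ++ [Dir.right])) = some b' := by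
      rw [← List.append_assoc, index_append, h2]; simp [GTerm.index]
    have hda := iha (r ++ [Dir.left]) a' h1a h2a
    have hdb := ihb (r ++ [Dir.right]) b' h1b h2b
    have e1 : lamDepth (r ++ [Dir.left]) = lamDepth r := by
      rw [lamDepth_append]; rfl
    have e2 : lamDepth (r ++ [Dir.right]) = lamDepth r := by
      rw [lamDepth_append]; rfl
    rw [e1] at hda; rw [e2] at hdb
    simp [declift, hda, hdb]
  | lam a ih =>
    intro r v₂ h1 h2
    have hv1 : (p ++ q₁ ++ r) ∈ Valid t := mem_valid_of_index h1
    have hv2 : (p ++ q₂ ++ r) ∈ Valid t := mem_valid_of_index h2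
    have hvb : (p ++ q₂) ∈ Valid t := valid_prefix ⟨r, rfl⟩ hv2
    have hbr : Bisim (t, p ++ q₁ ++ r) (t, p ++ q₂ ++ r) := (bisim_path r hb hv1 hvb).2
    have hL : t.index ((p ++ q₁ ++ r) ++ [Dir.down]) = some a := by
      rw [index_append, h1]; simp [GTerm.index]
    have hL2 : ((p ++ q₂ ++ r) ++ [Dir.down]) ∈ Valid t :=
      (bisim_path [Dir.down] hbr (mem_valid_of_index hL) hv2).1
    have hv2L : (v₂.index [Dir.down]).isSome := by
      have h' := hL2
      rw [Valid, Set.mem_setOf_eq, index_append, h2] at h'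
      simpa using h'
    obtain ⟨a', rfl⟩ := index_down_shape (isPure_index ht h2) hv2L
    have h1a : t.index (p ++ q₁ ++ (r ++ [Dir.down])) = some a := by
      rw [← List.append_assoc, index_append, h1]; simp [GTerm.index]
    have h2a : t.index (p ++ q₂ ++ (r ++ [Dir.down])) = some a' := by
      rw [← List.append_assoc, index_append, h2]; simp [GTerm.index]
    have hda := ih (r ++ [Dir.down]) a' h1a h2a
    have e1 : lamDepth (r ++ [Dir.down]) = lamDepth r + 1 := by
      rw [lamDepth_append]; rfl
    rw [e1] at hda
    simp [declift, hda]
  | var i =>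
    intro r v₂ h1 h2
    have hv1 : (p ++ q₁ ++ r) ∈ Valid t := mem_valid_of_index h1
    have hv2 : (p ++ q₂ ++ r) ∈ Valid t := mem_valid_of_index h2
    have hvb : (p ++ q₂) ∈ Valid t := valid_prefix ⟨r, rfl⟩ hv2
    have hbr : Bisim (t, p ++ q₁ ++ r) (t, p ++ q₂ ++ r) := (bisim_path r hb hv1 hvb).2
    have hi_lt : i < lamDepth (p ++ q₁ ++ r) := closed_var_lt hcl h1
    by_cases hcase : i < lamDepth r
    · -- binder inside r
      obtain ⟨r', r'', hr, hr''⟩ := exists_split hcase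
      have hpos : p ++ q₁ ++ r = (p ++ q₁ ++ r') ++ Dir.down :: r'' := by
        rw [hr]; simp [List.append_assoc]
      have hup1 : Trans (t, p ++ q₁ ++ r) Lab.up (t, p ++ q₁ ++ r') := by
        rw [hpos]
        exact Trans.up t _ r'' (by rw [← hpos, h1, hr''])
      obtain ⟨n₂', hup2, hb'⟩ := bisim_step hbr hup1
      obtain ⟨q, s₂, heq, hidx, rfl⟩ := trans_up_inv hup2
      have hv₂ : v₂ = GTerm.var (lamDepth s₂) := by
        rw [h2] at hidx; exact (Option.some_injective _ hidx)
      have hv1' : ((p ++ q₁) ++ r') ∈ Valid t :=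
        valid_prefix (by rw [hpos]; exact ⟨Dir.down :: r'', rfl⟩) hv1
      have hbq : Bisim (t, p ++ q₂ ++ r') (t, q) :=
        bisim_trans (bisim_symm (bisim_path r' hb hv1' hvb).2) hb'
      have hpref1 : q <+: p ++ q₂ ++ r := ⟨Dir.down :: s₂, heq.symm⟩
      have hpref2 : (p ++ q₂ ++ r') <+: p ++ q₂ ++ r := by
        rw [hr]; exact ⟨Dir.down :: r'', by simp [List.append_assoc]⟩
      have hq : q = p ++ q₂ ++ r' := bisim_prefix_eq hpref1 hpref2 hv2 (bisim_symm hbq)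
      subst hq
      have h'' : (p ++ q₂ ++ r') ++ (Dir.down :: s₂) = (p ++ q₂ ++ r') ++ (Dir.down :: r'') :=
        heq.symm.trans (by rw [hr]; simp [List.append_assoc])
      have hs₂ : s₂ = r'' := by
        have hc := List.append_cancel_left h''
        injection hc
      rw [hv₂, hs₂, hr'']
      simp only [declift, if_neg (show ¬ lamDepth r ≤ i by omega)]
    · -- free in r: binder above p
      push_neg at hcase
      have hu_q₁r : u.index (q₁ ++ r) = some (GTerm.var i) := by
        have h' := h1
        rw [List.append_assoc, index_append, hp] at h'
        simpa using h'
      obtain ⟨hq1valid, hlc2⟩ := hlc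
      obtain ⟨w, hw⟩ := index_of_valid hq1valid
      have hwr : w.index r = some (GTerm.var i) := by
        rw [index_append, hw] at hu_q₁r; simpa using hu_q₁r
      have hfree : (q₁ ++ r) ∈ Free u := hlc2 w hw r ⟨i, hwr, hcase⟩
      have hge : lamDepth (q₁ ++ r) ≤ i := by
        obtain ⟨j, hj, hj2⟩ := hfree
        rw [hu_q₁r] at hj
        have hji : j = i := by
          have := Option.some_injective _ hj
          cases this; rfl
        omega
      have hdepth_eq : lamDepth (p ++ q₁ ++ r) = lamDepth p + lamDepth (q₁ ++ r) := by
        rw [List.append_assoc, lamDepth_append]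
      have hklt : i - lamDepth (q₁ ++ r) < lamDepth p := by omega
      obtain ⟨p', p'', hpsplit, hp''⟩ := exists_split hklt
      have hpos : p ++ q₁ ++ r = p' ++ Dir.down :: (p'' ++ (q₁ ++ r)) := by
        rw [hpsplit]; simp [List.append_assoc]
      have hdep : lamDepth (p'' ++ (q₁ ++ r)) = i := by
        rw [lamDepth_append]; omega
      have hup1 : Trans (t, p ++ q₁ ++ r) Lab.up (t, p') := by
        rw [hpos]
        exact Trans.up t _ _ (by rw [← hpos, h1, hdep])
      obtain ⟨n₂', hup2, hb'⟩ := bisim_step hbr hup1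
      obtain ⟨q, s₂, heq, hidx, rfl⟩ := trans_up_inv hup2
      have hv₂ : v₂ = GTerm.var (lamDepth s₂) := by
        rw [h2] at hidx; exact (Option.some_injective _ hidx)
      have hpref1 : q <+: p ++ q₂ ++ r := ⟨Dir.down :: s₂, heq.symm⟩
      have hpref2 : p' <+: p ++ q₂ ++ r := by
        refine List.IsPrefix.trans ⟨Dir.down :: p'', hpsplit.symm⟩ ?_
        exact ⟨q₂ ++ r, by rw [List.append_assoc]⟩
      have hq : q = p' := bisim_prefix_eq hpref1 hpref2 hv2 (bisim_symm hb')
      rw [hq] at heq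
      have h'' : p' ++ (Dir.down :: s₂) = p' ++ (Dir.down :: (p'' ++ (q₂ ++ r))) :=
        heq.symm.trans (by rw [hpsplit]; simp [List.append_assoc])
      have hs₂ : s₂ = p'' ++ (q₂ ++ r) := by
        have hc := List.append_cancel_left h''
        injection hc
      subst hs₂
      rw [hv₂]
      have hl2 : lamDepth (p'' ++ (q₂ ++ r)) = lamDepth p'' + (lamDepth q₂ + lamDepth r) := by
        rw [lamDepth_append, lamDepth_append]
      have hl1 : lamDepth (q₁ ++ r) = lamDepth q₁ + lamDepth r := lamDepth_append _ _
      simp only [declift]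
      rw [if_pos (show lamDepth r ≤ i by omega),
        if_pos (show lamDepth r ≤ lamDepth (p'' ++ (q₂ ++ r)) by omega)]
      congr 1
      omega

/-- bisimilar nodes over a locally closed common context have
equal lifts at every common extension. -/
theorem bisim_locallyClosed_lift_eq (t : GTerm) (ht : t.IsPure)
    (p q₁ q₂ r : Pos)
    (n₁ : IsNode t (p ++ q₁ ++ r)) (n₂ : IsNode t (p ++ q₂ ++ r))
    (hb : Bisim (t, p ++ q₁) (t, p ++ q₂))
    (u : GTerm) (hp : t.index p = some u) (hlc : LocallyClosed u q₁) :
    ((liftAt u q₁).bind fun v => v.index r) =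
      ((liftAt u q₂).bind fun v => v.index r) := by
  obtain ⟨hcl, hv1⟩ := n₁
  obtain ⟨-, hv2⟩ := n₂
  obtain ⟨v₁, h1⟩ := index_of_valid hv1
  obtain ⟨v₂, h2⟩ := index_of_valid hv2
  obtain ⟨w₁, hw₁⟩ := index_of_valid hlc.1
  have hu1 : u.index (q₁ ++ r) = some v₁ := by
    have h' := h1; rw [List.append_assoc, index_append, hp] at h'; simpa using h'
  have hu2 : u.index (q₂ ++ r) = some v₂ := by
    have h' := h2; rw [List.append_assoc, index_append, hp] at h'; simpa using h'
  have hw₁r : w₁.index r = some v₁ := by rw [index_append, hw₁] at hu1; simpa using hu1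
  obtain ⟨w₂, hw₂⟩ : ∃ w₂, u.index q₂ = some w₂ := by
    rw [index_append] at hu2
    cases h' : u.index q₂ with
    | none => rw [h'] at hu2; simp at hu2
    | some w => exact ⟨w, rfl⟩
  have hw₂r : w₂.index r = some v₂ := by rw [index_append, hw₂] at hu2; simpa using hu2
  have key := main_lemma t ht hcl p q₁ q₂ u hp hlc hb v₁ r v₂ h1 h2
  rw [liftAt, liftAt, hw₁, hw₂]
  simp only [Option.map_some, Option.bind_some]
  rw [declift_index, declift_index, hw₁r, hw₂r]
  simp only [Option.map_some, Nat.zero_add]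
  exact congrArg some key

end HashAlpha
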